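/- Consider two agents with additive valuations and partition-matroid constraints with the same categories but possibly different capacities. The RR-squared algorithm — where agents alternately pick the remaining category maximizing their own first-picker surplus and the picker goes first in Capped Round Robin within that category — produces an F-EF1 allocation; in particular the agent who picks the first category has no feasible envy at all. -/

import Mathlib

/-- The best unallocated item for a picker with valuation `w`: an item of `L` of
maximum value (ties broken by the linear order on items). -/
noncomputable def bestItem {α : Type*} [DecidableEq α] [LinearOrder α] [Inhabited α]
    (w : α → ℕ) (L : Finset α) : α :=
  if h : (L.filter (fun g => ∀ g' ∈ L, w g' ≤ w g)).Nonempty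
  then (L.filter (fun g => ∀ g' ∈ L, w g' ≤ w g)).min' h
  else default

/-- Capped Round Robin: in turn `t`, agent `σ t` picks her best remaining item unless
she has reached her capacity, in which case she is skipped; the process runs until the
pool `L` is exhausted (the `fuel` parameter only ensures termination and is taken large
enough that it never runs out). -/
noncomputable def crr {α : Type*} [DecidableEq α] [LinearOrder α] [Inhabited α] {n : ℕ}
    (k : Fin n → ℕ) (v : Fin n → α → ℕ) (σ : ℕ → Fin n) :
    ℕ → ℕ → Finset α → (Fin n → Finset α) → Fin n → Finset α
  | 0, _, _, X => X
  | fuel + 1, t, L, X =>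
    if L.Nonempty then
      if (X (σ t)).card < k (σ t) then
        crr k v σ fuel (t + 1) (L.erase (bestItem (v (σ t)) L))
          (Function.update X (σ t) (insert (bestItem (v (σ t)) L) (X (σ t))))
      else crr k v σ fuel (t + 1) L X
    else X

/-- Capped Round Robin for two agents on a single category: agent `l` picks first,
then the agents alternate; agent `i` picks using her valuation `v i`, subject to her
capacity `k i`. -/
noncomputable def crr2 {α : Type*} [DecidableEq α] [LinearOrder α] [Inhabited α]
    (k : Fin 2 → ℕ) (v : Fin 2 → α → ℕ) (l : Fin 2) (M : Finset α) :
    Fin 2 → Finset α :=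
  crr k v (fun t => if t % 2 = 0 then l else l + 1) (2 * (M.card + 1)) 0 M (fun _ => ∅)

/-- Feasible value of a bundle `T` under value function `v` and capacity `c`:
the maximum value of a subset of `T` of size at most `c`. -/
noncomputable def feasVal {α : Type*} [DecidableEq α] (v : α → ℕ) (c : ℕ)
    (T : Finset α) : ℕ :=
  ((T.powerset.filter (fun S => S.card ≤ c)).image (fun S => S.sum v)).sup id

/-- First-picker surplus of agent `a` in category `h`: her feasible value of her own
share minus her feasible value of the other's share, in the Capped Round Robin outcome
on category `C h` where `a` picks first. -/
noncomputable def catSurplus {α : Type*} [DecidableEq α] [LinearOrder α] [Inhabited α]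
    {l : ℕ} (k : Fin 2 → Fin l → ℕ) (v : Fin 2 → α → ℕ) (C : Fin l → Finset α)
    (a : Fin 2) (h : Fin l) : ℤ :=
  ((feasVal (v a) (k a h) (crr2 (fun i => k i h) v a (C h) a) : ℕ) : ℤ) -
    ((feasVal (v a) (k a h) (crr2 (fun i => k i h) v a (C h) (a + 1)) : ℕ) : ℤ)

/-- The remaining category maximizing `f` (ties broken by the order on `Fin l`). -/
noncomputable def bestCat {l : ℕ} [NeZero l] (f : Fin l → ℤ)
    (rem : Finset (Fin l)) : Fin l :=
  if h : (rem.filter (fun c => ∀ c' ∈ rem, f c' ≤ f c)).Nonempty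
  then (rem.filter (fun c => ∀ c' ∈ rem, f c' ≤ f c)).min' h
  else default

/-- The RR-squared algorithm: while categories remain, the current agent `a` picks the
remaining category maximizing her own first-picker surplus, the category is allocated by
Capped Round Robin with `a` picking first, and the turn passes to the other agent. -/
noncomputable def rr2run {α : Type*} [DecidableEq α] [LinearOrder α] [Inhabited α]
    {l : ℕ} [NeZero l] (k : Fin 2 → Fin l → ℕ) (v : Fin 2 → α → ℕ)
    (C : Fin l → Finset α) :
    ℕ → Finset (Fin l) → Fin 2 → (Fin 2 → Finset α) → Fin 2 → Finset α
  | 0, _, _, X => X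
  | fuel + 1, rem, a, X =>
    if rem.Nonempty then
      rr2run k v C fuel (rem.erase (bestCat (catSurplus k v C a) rem)) (a + 1)
        (fun i => X i ∪
          crr2 (fun t => k t (bestCat (catSurplus k v C a) rem)) v a
            (C (bestCat (catSurplus k v C a) rem)) i)
    else X

/-- Feasible value of bundle `T` for an agent with per-category capacities `kc` under a
partition matroid with categories `C`. -/
noncomputable def pFeasVal {α : Type*} [DecidableEq α] {l : ℕ} (v : α → ℕ)
    (kc : Fin l → ℕ) (C : Fin l → Finset α) (T : Finset α) : ℕ :=
  ((T.powerset.filter (fun S => ∀ h, (S ∩ C h).card ≤ kc h)).image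
    (fun S => S.sum v)).sup id

set_option linter.unusedSectionVars false
set_option linter.unusedVariables false
namespace RR2


open Finset

/-- s-th largest value of a multiset of naturals (0-indexed), 0 if out of range. -/
def nth (m : Multiset ℕ) (s : ℕ) : ℕ :=
  (m.toFinset.filter (fun b => s + 1 ≤ m.countP (fun x => b ≤ x))).sup id

lemma countP_mono_mem {m : Multiset ℕ} {p q : ℕ → Prop} [DecidablePred p] [DecidablePred q]
    (h : ∀ x ∈ m, p x → q x) : m.countP p ≤ m.countP q := by
  induction m using Multiset.induction_on with
  | empty => simp
  | cons a s ih =>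
    have ih' := ih (fun x hx hp => h x (Multiset.mem_cons_of_mem hx) hp)
    rw [Multiset.countP_cons, Multiset.countP_cons]
    by_cases hp : p a
    · have hq : q a := h a (Multiset.mem_cons_self a s) hp
      simp [hp, hq]; omega
    · simp only [hp, if_false]
      split <;> omega

lemma nth_zero (s : ℕ) : nth 0 s = 0 := by
  simp [nth]

lemma le_nth_of_mem_count {m : Multiset ℕ} {b s : ℕ} (hb : b ∈ m)
    (hc : s + 1 ≤ m.countP (fun x => b ≤ x)) : b ≤ nth m s :=
  Finset.le_sup (f := id) (by simp [Multiset.mem_toFinset.mpr hb, hc]; omega)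

lemma nth_spec {m : Multiset ℕ} {s : ℕ} (h : 0 < nth m s) :
    nth m s ∈ m ∧ s + 1 ≤ m.countP (fun x => nth m s ≤ x) := by
  set F := m.toFinset.filter (fun b => s + 1 ≤ m.countP (fun x => b ≤ x)) with hF
  have hne : F.Nonempty := by
    by_contra hc
    rw [Finset.not_nonempty_iff_eq_empty] at hc
    have : nth m s = 0 := by rw [nth, ← hF, hc]; simp
    omega
  obtain ⟨b, hb, heq⟩ := Finset.exists_mem_eq_sup F hne id
  have : nth m s = b := heq
  rw [this]
  simp only [hF, Finset.mem_filter, Multiset.mem_toFinset] at hb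
  exact hb

/-- count introduction: if at least s+1 elements are ≥ c then c ≤ nth m s. -/
lemma le_nth {m : Multiset ℕ} {c s : ℕ} (hc : s + 1 ≤ m.countP (fun x => c ≤ x)) :
    c ≤ nth m s := by
  rcases Nat.eq_zero_or_pos c with rfl | hcpos
  · exact Nat.zero_le _
  · have hex : ∃ x ∈ m, c ≤ x := by
      have : 0 < m.countP (fun x => c ≤ x) := by omega
      exact Multiset.countP_pos.mp this
    set F' := m.toFinset.filter (fun x => c ≤ x) with hF'
    have hne : F'.Nonempty := by
      obtain ⟨x, hx, hcx⟩ := hex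
      exact ⟨x, by simp [hF', Multiset.mem_toFinset.mpr hx, hcx]⟩
    set b := F'.min' hne with hb
    have hbF : b ∈ F' := Finset.min'_mem _ _
    simp only [hF', Finset.mem_filter, Multiset.mem_toFinset] at hbF
    have hble : ∀ x ∈ m, c ≤ x → b ≤ x := by
      intro x hx hcx
      exact Finset.min'_le _ _ (by simp [hF', Multiset.mem_toFinset.mpr hx, hcx])
    have hcount : m.countP (fun x => c ≤ x) ≤ m.countP (fun x => b ≤ x) :=
      countP_mono_mem hble
    exact le_trans hbF.2 (le_nth_of_mem_count hbF.1 (by omega))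

/-- count elimination. -/
lemma count_of_le_nth {m : Multiset ℕ} {c s : ℕ} (hc : 0 < c) (h : c ≤ nth m s) :
    s + 1 ≤ m.countP (fun x => c ≤ x) := by
  have hpos : 0 < nth m s := lt_of_lt_of_le hc h
  obtain ⟨_, hcount⟩ := nth_spec hpos
  exact le_trans hcount (countP_mono_mem (fun x _ hx => le_trans h hx))

lemma nth_mono_le {m m' : Multiset ℕ} (h : m' ≤ m) (s : ℕ) : nth m' s ≤ nth m s := by
  rcases Nat.eq_zero_or_pos (nth m' s) with h0 | hpos
  · omega
  · exact le_nth (le_trans (nth_spec hpos).2 (Multiset.countP_le_of_le _ h))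

lemma nth_anti {m : Multiset ℕ} {s s' : ℕ} (h : s ≤ s') : nth m s' ≤ nth m s := by
  rcases Nat.eq_zero_or_pos (nth m s') with h0 | hpos
  · omega
  · exact le_nth (le_trans (by omega) (nth_spec hpos).2)

lemma nth_le_of_forall_le {m : Multiset ℕ} {a s : ℕ} (h : ∀ x ∈ m, x ≤ a) :
    nth m s ≤ a := by
  rcases Nat.eq_zero_or_pos (nth m s) with h0 | hpos
  · omega
  · exact h _ (nth_spec hpos).1

lemma mem_le_nth_zero {m : Multiset ℕ} {x : ℕ} (hx : x ∈ m) : x ≤ nth m 0 :=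
  le_nth_of_mem_count hx (Multiset.countP_pos_of_mem hx le_rfl)

/-- erasing a maximal element shifts order statistics down. -/
lemma nth_erase_max {m : Multiset ℕ} {a : ℕ} (ha : a ∈ m) (hmax : ∀ x ∈ m, x ≤ a)
    (j : ℕ) : nth (m.erase a) j ≤ nth m (j + 1) := by
  rcases Nat.eq_zero_or_pos (nth (m.erase a) j) with h0 | hpos
  · omega
  · set c := nth (m.erase a) j with hc
    have hcount : j + 1 ≤ (m.erase a).countP (fun x => c ≤ x) := count_of_le_nth hpos le_rfl
    have hca : c ≤ a := by
      have hcm : c ∈ m.erase a := (nth_spec hpos).1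
      exact hmax _ (Multiset.mem_of_mem_erase hcm)
    have : m.countP (fun x => c ≤ x) = (m.erase a).countP (fun x => c ≤ x) + 1 := by
      conv_lhs => rw [← Multiset.cons_erase ha]
      rw [Multiset.countP_cons]
      simp [hca]
    exact le_nth (by omega)

/-- order statistics only drop by one position when erasing any element. -/
lemma nth_succ_le_nth_erase {m : Multiset ℕ} (a : ℕ) (j : ℕ) :
    nth m (j + 1) ≤ nth (m.erase a) j := by
  rcases Nat.eq_zero_or_pos (nth m (j + 1)) with h0 | hpos
  · omega
  · set c := nth m (j + 1) with hc
    have hcount : j + 2 ≤ m.countP (fun x => c ≤ x) := count_of_le_nth hpos le_rfl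
    have hle : m.countP (fun x => c ≤ x) ≤ (m.erase a).countP (fun x => c ≤ x) + 1 := by
      by_cases ha : a ∈ m
      · conv_lhs => rw [← Multiset.cons_erase ha]
        rw [Multiset.countP_cons]
        split <;> omega
      · rw [Multiset.erase_of_notMem ha]; omega
    exact le_nth (by omega)

lemma nth_cons_le_max {m : Multiset ℕ} (a : ℕ) (s : ℕ) :
    nth (a ::ₘ m) s ≤ max a (nth m s) := by
  rcases Nat.eq_zero_or_pos (nth (a ::ₘ m) s) with h0 | hpos
  · omega
  · set c := nth (a ::ₘ m) s with hc
    by_cases hca : c ≤ a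
    · exact le_max_of_le_left hca
    · have hcount : s + 1 ≤ (a ::ₘ m).countP (fun x => c ≤ x) := count_of_le_nth hpos le_rfl
      rw [Multiset.countP_cons] at hcount
      have : ¬ (c ≤ a) := hca
      simp only [this, if_false, add_zero] at hcount
      exact le_max_of_le_right (le_nth hcount)

lemma nth_cons_shift {m : Multiset ℕ} (a : ℕ) (s : ℕ) :
    nth (a ::ₘ m) (s + 1) ≤ nth m s := by
  rcases Nat.eq_zero_or_pos (nth (a ::ₘ m) (s + 1)) with h0 | hpos
  · omega
  · have hcount := count_of_le_nth hpos (le_refl (nth (a ::ₘ m) (s + 1)))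
    rw [Multiset.countP_cons] at hcount
    refine le_nth ?_
    split at hcount <;> omega

lemma le_nth_cons_merge {m : Multiset ℕ} {a c j : ℕ} (hca : c ≤ a) (h : c ≤ nth m j) :
    c ≤ nth (a ::ₘ m) (j + 1) := by
  rcases Nat.eq_zero_or_pos c with rfl | hcpos
  · exact Nat.zero_le _
  · have hcount := count_of_le_nth hcpos h
    refine le_nth ?_
    rw [Multiset.countP_cons]
    simp only [hca, if_true]
    omega

/-- sum of a short multiset is at most the sum of its first d order statistics. -/
lemma sum_le_sum_nth {m : Multiset ℕ} {d : ℕ} (h : Multiset.card m ≤ d) :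
    m.sum ≤ ∑ s ∈ Finset.range d, nth m s := by
  induction d generalizing m with
  | zero =>
    have : m = 0 := Multiset.card_eq_zero.mp (by omega)
    simp [this]
  | succ d ih =>
    rcases Multiset.empty_or_exists_mem m with rfl | ⟨a, ha⟩
    · simp
    · obtain ⟨b, hb, hbmax⟩ : ∃ b ∈ m, ∀ x ∈ m, x ≤ b := by
        obtain ⟨b, hb, hmax⟩ := Finset.exists_max_image m.toFinset id ⟨a, Multiset.mem_toFinset.mpr ha⟩
        exact ⟨b, Multiset.mem_toFinset.mp hb, fun x hx => hmax x (Multiset.mem_toFinset.mpr hx)⟩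
      have hsum : m.sum = b + (m.erase b).sum := by
        conv_lhs => rw [← Multiset.cons_erase hb]
        simp
      have hmpos : 0 < Multiset.card m := Multiset.card_pos.mpr (by rintro rfl; simp at hb)
      have hcard : Multiset.card (m.erase b) ≤ d := by
        rw [Multiset.card_erase_of_mem hb, Nat.pred_eq_sub_one]
        omega
      have hrec := ih hcard
      have hb0 : b ≤ nth m 0 := mem_le_nth_zero hb
      have hshift : ∀ s, nth (m.erase b) s ≤ nth m (s + 1) :=
        fun s => nth_erase_max hb hbmax s
      calc m.sum = b + (m.erase b).sum := hsum
        _ ≤ nth m 0 + ∑ s ∈ Finset.range d, nth (m.erase b) s := by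
            exact Nat.add_le_add hb0 hrec
        _ ≤ nth m 0 + ∑ s ∈ Finset.range d, nth m (s + 1) := by
            gcongr with s hs
            exact hshift s
        _ = ∑ s ∈ Finset.range (d + 1), nth m s := by
            rw [Finset.sum_range_succ' (fun s => nth m s) d]
            exact Nat.add_comm _ _



variable {α : Type*} [DecidableEq α]

def vals (w : α → ℕ) (T : Finset α) : Multiset ℕ := T.val.map w

lemma vals_mono {w : α → ℕ} {S T : Finset α} (h : S ⊆ T) : vals w S ≤ vals w T :=
  Multiset.map_le_map (Finset.val_le_iff.mpr h)

lemma vals_insert (w : α → ℕ) {T : Finset α} {a : α} (ha : a ∉ T) :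
    vals w (insert a T) = w a ::ₘ vals w T := by
  rw [vals, Finset.insert_val_of_notMem ha, Multiset.map_cons]; rfl

lemma map_erase_val {w : α → ℕ} {m : Multiset α} {y : α} (hy : y ∈ m) :
    (m.erase y).map w = (m.map w).erase (w y) := by
  have h1 : m = y ::ₘ m.erase y := (Multiset.cons_erase hy).symm
  have h2 : m.map w = w y ::ₘ (m.erase y).map w := by
    conv_lhs => rw [h1]
    rw [Multiset.map_cons]
  rw [h2, Multiset.erase_cons_head]

lemma vals_erase (w : α → ℕ) {T : Finset α} {y : α} (hy : y ∈ T) :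
    vals w (T.erase y) = (vals w T).erase (w y) := by
  rw [vals, Finset.erase_val, map_erase_val hy]; rfl

lemma vals_sum (w : α → ℕ) (T : Finset α) : (vals w T).sum = T.sum w := rfl

lemma vals_card (w : α → ℕ) (T : Finset α) : Multiset.card (vals w T) = T.card := by
  simp [vals]

lemma mem_vals {w : α → ℕ} {T : Finset α} {x : α} (hx : x ∈ T) : w x ∈ vals w T :=
  Multiset.mem_map_of_mem w hx

lemma vals_empty (w : α → ℕ) : vals w (∅ : Finset α) = 0 := rfl

lemma le_feasVal {v : α → ℕ} {c : ℕ} {S T : Finset α} (hST : S ⊆ T) (hc : S.card ≤ c) :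
    S.sum v ≤ feasVal v c T :=
  Finset.le_sup (f := id)
    (Finset.mem_image_of_mem _ (by simp [Finset.mem_filter, Finset.mem_powerset, hST, hc]))

lemma feasVal_le {v : α → ℕ} {c : ℕ} {T : Finset α} {n : ℕ}
    (h : ∀ S ⊆ T, S.card ≤ c → S.sum v ≤ n) : feasVal v c T ≤ n := by
  refine Finset.sup_le ?_
  intro b hb
  obtain ⟨S, hS, rfl⟩ := Finset.mem_image.mp hb
  rw [Finset.mem_filter, Finset.mem_powerset] at hS
  exact h S hS.1 hS.2

lemma feasVal_le_sum {v : α → ℕ} {c : ℕ} {T : Finset α} : feasVal v c T ≤ T.sum v :=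
  feasVal_le fun S hS _ => Finset.sum_le_sum_of_subset hS

lemma feasVal_eq_sum {v : α → ℕ} {c : ℕ} {T : Finset α} (h : T.card ≤ c) :
    feasVal v c T = T.sum v :=
  le_antisymm feasVal_le_sum (le_feasVal Finset.Subset.rfl h)

lemma feasVal_mono_subset {v : α → ℕ} {c : ℕ} {S T : Finset α} (h : S ⊆ T) :
    feasVal v c S ≤ feasVal v c T :=
  feasVal_le fun S' h' hc => le_feasVal (h'.trans h) hc

lemma feasVal_empty {v : α → ℕ} {c : ℕ} : feasVal v c (∅ : Finset α) = 0 := by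
  apply le_antisymm _ (Nat.zero_le _)
  exact feasVal_le fun S hS _ => by
    rw [Finset.subset_empty.mp hS]; simp

lemma feasVal_le_sum_nth {v : α → ℕ} {d : ℕ} {T : Finset α} :
    feasVal v d T ≤ ∑ s ∈ Finset.range d, nth (vals v T) s := by
  refine feasVal_le fun S hS hc => ?_
  calc S.sum v = (vals v S).sum := (vals_sum v S).symm
    _ ≤ ∑ s ∈ Finset.range d, nth (vals v S) s := sum_le_sum_nth (by rw [vals_card]; omega)
    _ ≤ ∑ s ∈ Finset.range d, nth (vals v T) s := by
        gcongr with s hs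
        exact nth_mono_le (vals_mono hS) s


section CRR

variable {α : Type*} [DecidableEq α] [LinearOrder α] [Inhabited α]

lemma bestItem_spec {w : α → ℕ} {L : Finset α} (hL : L.Nonempty) :
    bestItem w L ∈ L ∧ ∀ g' ∈ L, w g' ≤ w (bestItem w L) := by
  obtain ⟨b, hb, hmax⟩ := Finset.exists_max_image L w hL
  have hne : (L.filter (fun g => ∀ g' ∈ L, w g' ≤ w g)).Nonempty :=
    ⟨b, Finset.mem_filter.mpr ⟨hb, hmax⟩⟩
  rw [bestItem, dif_pos hne]
  have := Finset.min'_mem _ hne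
  rw [Finset.mem_filter] at this
  exact this

variable {n : ℕ} (k : Fin n → ℕ) (v : Fin n → α → ℕ) (σ : ℕ → Fin n)

lemma crr_zero (t : ℕ) (L : Finset α) (X : Fin n → Finset α) :
    crr k v σ 0 t L X = X := rfl

lemma crr_succ (fuel t : ℕ) (L : Finset α) (X : Fin n → Finset α) :
    crr k v σ (fuel + 1) t L X =
      if L.Nonempty then
        if (X (σ t)).card < k (σ t) then
          crr k v σ fuel (t + 1) (L.erase (bestItem (v (σ t)) L))
            (Function.update X (σ t) (insert (bestItem (v (σ t)) L) (X (σ t))))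
        else crr k v σ fuel (t + 1) L X
      else X := rfl

lemma crr_subset (fuel : ℕ) : ∀ (t : ℕ) (L : Finset α) (X : Fin n → Finset α) (a : Fin n),
    X a ⊆ crr k v σ fuel t L X a := by
  induction fuel with
  | zero => intro t L X a; rw [crr_zero]
  | succ fuel ih =>
    intro t L X a
    rw [crr_succ]
    by_cases hL : L.Nonempty
    · rw [if_pos hL]
      by_cases hcap : (X (σ t)).card < k (σ t)
      · rw [if_pos hcap]
        refine subset_trans ?_ (ih _ _ _ a)
        by_cases ha : a = σ t
        · subst ha; rw [Function.update_self]; exact Finset.subset_insert _ _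
        · rw [Function.update_of_ne ha]
      · rw [if_neg hcap]; exact ih _ _ _ a
    · rw [if_neg hL]

lemma crr_subset_union (fuel : ℕ) :
    ∀ (t : ℕ) (L : Finset α) (X : Fin n → Finset α) (a : Fin n),
    crr k v σ fuel t L X a ⊆ X a ∪ L := by
  induction fuel with
  | zero => intro t L X a; rw [crr_zero]; exact Finset.subset_union_left
  | succ fuel ih =>
    intro t L X a
    rw [crr_succ]
    by_cases hL : L.Nonempty
    · rw [if_pos hL]
      have hg : bestItem (v (σ t)) L ∈ L := (bestItem_spec hL).1
      by_cases hcap : (X (σ t)).card < k (σ t)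
      · rw [if_pos hcap]
        refine subset_trans (ih _ _ _ a) ?_
        intro x hx
        rcases Finset.mem_union.mp hx with hx | hx
        · by_cases ha : a = σ t
          · subst ha; rw [Function.update_self] at hx
            rcases Finset.mem_insert.mp hx with rfl | hx
            · exact Finset.mem_union_right _ hg
            · exact Finset.mem_union_left _ hx
          · rw [Function.update_of_ne ha] at hx; exact Finset.mem_union_left _ hx
        · exact Finset.mem_union_right _ (Finset.mem_of_mem_erase hx)
      · rw [if_neg hcap]; exact ih _ _ _ a
    · rw [if_neg hL]; exact Finset.subset_union_left

lemma crr_capped (fuel : ℕ) : ∀ (t : ℕ) (L : Finset α) (X : Fin n → Finset α) (a : Fin n),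
    k a ≤ (X a).card → crr k v σ fuel t L X a = X a := by
  induction fuel with
  | zero => intro t L X a _; rw [crr_zero]
  | succ fuel ih =>
    intro t L X a hcard
    rw [crr_succ]
    by_cases hL : L.Nonempty
    · rw [if_pos hL]
      by_cases hcap : (X (σ t)).card < k (σ t)
      · rw [if_pos hcap]
        have ha : a ≠ σ t := by
          intro h; subst h; omega
        rw [ih _ _ _ a (by rw [Function.update_of_ne ha]; exact hcard),
          Function.update_of_ne ha]
      · rw [if_neg hcap]; exact ih _ _ _ a hcard
    · rw [if_neg hL]

lemma crr_card (fuel : ℕ) : ∀ (t : ℕ) (L : Finset α) (X : Fin n → Finset α) (a : Fin n),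
    (X a).card ≤ k a → (crr k v σ fuel t L X a).card ≤ k a := by
  induction fuel with
  | zero => intro t L X a h; rw [crr_zero]; exact h
  | succ fuel ih =>
    intro t L X a hcard
    rw [crr_succ]
    by_cases hL : L.Nonempty
    · rw [if_pos hL]
      by_cases hcap : (X (σ t)).card < k (σ t)
      · rw [if_pos hcap]
        refine ih _ _ _ a ?_
        by_cases ha : a = σ t
        · subst ha
          rw [Function.update_self]
          calc (insert (bestItem (v (σ t)) L) (X (σ t))).card
              ≤ (X (σ t)).card + 1 := Finset.card_insert_le _ _
            _ ≤ k (σ t) := by omega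
        · rw [Function.update_of_ne ha]; exact hcard
      · rw [if_neg hcap]; exact ih _ _ _ a hcard
    · rw [if_neg hL]; exact hcard

/-- new-items decomposition at a pick step. -/
lemma sdiff_insert_step {X X' R : Finset α} {g : α} (hgX : g ∉ X)
    (hX' : X' = insert g X) (hXR : X' ⊆ R) :
    R \ X = insert g (R \ X') := by
  subst hX'
  ext x
  simp only [Finset.mem_sdiff, Finset.mem_insert]
  have hgR : g ∈ R := hXR (Finset.mem_insert_self _ _)
  constructor
  · rintro ⟨hxR, hxX⟩
    by_cases hxg : x = g
    · exact Or.inl hxg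
    · exact Or.inr ⟨hxR, by tauto⟩
  · rintro (rfl | ⟨hxR, hxX⟩)
    · exact ⟨hgR, hgX⟩
    · exact ⟨hxR, by tauto⟩

end CRR


section GEN

variable {α : Type*} [DecidableEq α] [LinearOrder α] [Inhabited α]

lemma fin2_add_one_ne (i : Fin 2) : i + 1 ≠ i := by fin_cases i <;> decide

lemma fin2_add_two (i : Fin 2) : i + 1 + 1 = i := by fin_cases i <;> decide

variable (k : Fin 2 → ℕ) (v : Fin 2 → α → ℕ) (σ : ℕ → Fin 2)

lemma crr_new_subset (fuel t : ℕ) (L : Finset α) (X : Fin 2 → Finset α) (a : Fin 2) :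
    crr k v σ fuel t L X a \ X a ⊆ L := by
  intro x hx
  rw [Finset.mem_sdiff] at hx
  rcases Finset.mem_union.mp (crr_subset_union k v σ fuel t L X a hx.1) with h | h
  · exact absurd h hx.2
  · exact h

lemma vals_max_of_best {w : α → ℕ} {L : Finset α} (hL : L.Nonempty) :
    ∀ x ∈ vals w L, x ≤ w (bestItem w L) := by
  intro x hx
  obtain ⟨y, hy, rfl⟩ := Multiset.mem_map.mp hx
  exact (bestItem_spec hL).2 y (Finset.mem_val.mp hy)

lemma gen_bound (hσ : ∀ s, σ (s + 1) = σ s + 1) (fuel : ℕ) :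
    ∀ (t : ℕ) (L : Finset α) (X : Fin 2 → Finset α), (∀ a, Disjoint (X a) L) →
    (∀ s, nth (vals (v (σ t + 1)) (crr k v σ fuel t L X (σ t) \ X (σ t))) s
        ≤ nth (vals (v (σ t + 1)) L) (s + min s (k (σ t + 1) - (X (σ t + 1)).card)))
    ∧ (∀ s, nth (vals (v (σ t)) (crr k v σ fuel t L X (σ t + 1) \ X (σ t + 1))) s
        ≤ nth (vals (v (σ t)) L) (s + min (s + 1) (k (σ t) - (X (σ t)).card))) := by
  induction fuel with
  | zero =>
    intro t L X _
    rw [crr_zero]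
    constructor <;> intro s <;> simp [Finset.sdiff_self, vals_empty, nth_zero]
  | succ fuel ih =>
    intro t L X hdisj
    by_cases hL : L.Nonempty
    · by_cases hcap : (X (σ t)).card < k (σ t)
      · -- pick step
        set m := σ t with hm
        set o := σ t + 1 with ho
        have hom : o ≠ m := fin2_add_one_ne m
        have hoo : o + 1 = m := fin2_add_two m
        set g := bestItem (v m) L with hg
        have hgL : g ∈ L := (bestItem_spec hL).1
        set L' := L.erase g with hL'
        set X' := Function.update X m (insert g (X m)) with hX'
        have hXm' : X' m = insert g (X m) := by rw [hX']; exact Function.update_self _ _ _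
        have hXo' : X' o = X o := by rw [hX']; exact Function.update_of_ne hom _ _
        have hgXm : g ∉ X m := fun h => (Finset.disjoint_left.mp (hdisj m)) h hgL
        have hcrr : ∀ a, crr k v σ (fuel + 1) t L X a = crr k v σ fuel (t + 1) L' X' a := by
          intro a
          rw [crr_succ, if_pos hL, if_pos hcap]
        have hdisj' : ∀ a, Disjoint (X' a) L' := by
          intro a
          by_cases ha : a = m
          · subst ha
            rw [hXm', Finset.disjoint_left]
            intro x hx hx'
            rcases Finset.mem_insert.mp hx with rfl | hx
            · rw [hL'] at hx'
              exact (Finset.notMem_erase _ _) hx'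
            · rw [hL'] at hx'
              exact (Finset.disjoint_left.mp (hdisj m)) hx (Finset.mem_of_mem_erase hx')
          · rw [hX', Function.update_of_ne ha, hL']
            exact Finset.disjoint_of_subset_right (Finset.erase_subset _ _) (hdisj a)
        have IH := ih (t + 1) L' X' hdisj'
        rw [hσ t, ← ho, hoo] at IH
        obtain ⟨IH1, IH2⟩ := IH
        set R := crr k v σ fuel (t + 1) L' X' with hR
        have hcardm : (X' m).card = (X m).card + 1 := by
          rw [hXm', Finset.card_insert_of_notMem hgXm]
        have hgRm : X' m ⊆ R m := crr_subset k v σ fuel (t + 1) L' X' m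
        have hnewm : crr k v σ (fuel + 1) t L X m \ X m = insert g (R m \ X' m) := by
          rw [hcrr m]
          exact sdiff_insert_step hgXm hXm' hgRm
        have hnewo : crr k v σ (fuel + 1) t L X o \ X o = R o \ X' o := by
          rw [hcrr o, hXo']
        have hvLm : vals (v m) L' = (vals (v m) L).erase (v m g) := by
          rw [hL']; exact vals_erase (v m) hgL
        have hvLo : vals (v o) L = v o g ::ₘ vals (v o) L' := by
          rw [hL', vals_erase (v o) hgL, Multiset.cons_erase (mem_vals hgL)]
        have hcm : 1 ≤ k m - (X m).card := by omega
        constructor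
        · -- part 1 : perspective o, about new items of m
          intro s
          rw [hnewm]
          have hgS : g ∉ R m \ X' m := fun h =>
            (Finset.mem_sdiff.mp h).2 (by rw [hXm']; exact Finset.mem_insert_self _ _)
          have hvals : vals (v o) (insert g (R m \ X' m)) = v o g ::ₘ vals (v o) (R m \ X' m) :=
            vals_insert _ hgS
          rw [hvals]
          rcases Nat.eq_zero_or_pos s with rfl | hs
          · -- s = 0 : subset bound
            have hsub : insert g (R m \ X' m) ⊆ L := by
              rw [← hnewm]
              exact crr_new_subset k v σ (fuel + 1) t L X m
            have h0 := nth_mono_le (vals_mono (w := v o) hsub) 0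
            rw [hvals] at h0
            refine le_trans h0 (nth_anti (by omega))
          · have hmax := nth_cons_le_max (m := vals (v o) (R m \ X' m)) (v o g) s
            rcases le_max_iff.mp hmax with hc | hc
            · -- top value ≤ v o g : peel and merge
              obtain ⟨s', rfl⟩ : ∃ s', s = s' + 1 := ⟨s - 1, by omega⟩
              have hshift := nth_cons_shift (m := vals (v o) (R m \ X' m)) (v o g) s'
              have hIH := IH2 s'
              rw [hXo'] at hIH
              have hchain := le_trans hshift hIH
              have hmerge := le_nth_cons_merge (m := vals (v o) L') (a := v o g) hc hchain
              rw [← hvLo] at hmerge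
              refine le_trans hmerge (nth_anti (by omega))
            · have hIH := IH2 s
              rw [hXo'] at hIH
              refine le_trans hc (le_trans hIH (le_trans (nth_mono_le ?_ _) (nth_anti (by omega))))
              rw [hL']
              exact vals_mono (Finset.erase_subset _ _)
        · -- part 2 : perspective m, about new items of o
          intro s
          rw [hnewo]
          have hIH := IH1 s
          rw [hcardm, hvLm] at hIH
          have herase := nth_erase_max (m := vals (v m) L) (a := v m g)
            (mem_vals hgL) (vals_max_of_best hL) (s + min s (k m - ((X m).card + 1)))
          refine le_trans hIH (le_trans herase (nth_anti (by omega)))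
      · -- skip step (mover capped)
        have hcrr : ∀ a, crr k v σ (fuel + 1) t L X a = crr k v σ fuel (t + 1) L X a := by
          intro a
          rw [crr_succ, if_pos hL, if_neg hcap]
        have IH := ih (t + 1) L X hdisj
        rw [hσ t, fin2_add_two] at IH
        obtain ⟨IH1, IH2⟩ := IH
        constructor
        · intro s
          rw [hcrr]
          exact le_trans (IH2 s) (nth_anti (by omega))
        · intro s
          rw [hcrr]
          have hz : k (σ t) - (X (σ t)).card = 0 := by omega
          refine le_trans (IH1 s) (nth_anti (by omega))
    · -- L empty
      have hcrr : ∀ a, crr k v σ (fuel + 1) t L X a = X a := by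
        intro a
        rw [crr_succ, if_neg hL]
      constructor <;> intro s <;>
        simp [hcrr, Finset.sdiff_self, vals_empty, nth_zero]

end GEN


section LOW

variable {α : Type*} [DecidableEq α] [LinearOrder α] [Inhabited α]
variable (k : Fin 2 → ℕ) (v : Fin 2 → α → ℕ) (σ : ℕ → Fin 2)

lemma low_bound (hσ : ∀ s, σ (s + 1) = σ s + 1) (fuel : ℕ) :
    ∀ (t : ℕ) (L : Finset α) (X : Fin 2 → Finset α), (∀ a, Disjoint (X a) L) →
    (2 * L.card ≤ fuel →
      ∑ s ∈ Finset.range (k (σ t) - (X (σ t)).card), nth (vals (v (σ t)) L) (2 * s)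
        ≤ ∑ x ∈ (crr k v σ fuel t L X (σ t) \ X (σ t)), v (σ t) x)
    ∧ (2 * L.card + 1 ≤ fuel →
      ∑ s ∈ Finset.range (k (σ t + 1) - (X (σ t + 1)).card),
          nth (vals (v (σ t + 1)) L) (2 * s + 1)
        ≤ ∑ x ∈ (crr k v σ fuel t L X (σ t + 1) \ X (σ t + 1)), v (σ t + 1) x) := by
  induction fuel with
  | zero =>
    intro t L X _
    constructor
    · intro hf
      have : L = ∅ := Finset.card_eq_zero.mp (by omega)
      subst this
      simp [vals_empty, nth_zero]
    · intro hf
      omega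
  | succ fuel ih =>
    intro t L X hdisj
    by_cases hL : L.Nonempty
    · by_cases hcap : (X (σ t)).card < k (σ t)
      · -- pick step
        set m := σ t with hm
        set o := σ t + 1 with ho
        have hom : o ≠ m := fin2_add_one_ne m
        have hoo : o + 1 = m := fin2_add_two m
        set g := bestItem (v m) L with hg
        have hgL : g ∈ L := (bestItem_spec hL).1
        set L' := L.erase g with hL'
        set X' := Function.update X m (insert g (X m)) with hX'
        have hXm' : X' m = insert g (X m) := by rw [hX']; exact Function.update_self _ _ _
        have hXo' : X' o = X o := by rw [hX']; exact Function.update_of_ne hom _ _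
        have hgXm : g ∉ X m := fun h => (Finset.disjoint_left.mp (hdisj m)) h hgL
        have hcrr : ∀ a, crr k v σ (fuel + 1) t L X a = crr k v σ fuel (t + 1) L' X' a := by
          intro a
          rw [crr_succ, if_pos hL, if_pos hcap]
        have hdisj' : ∀ a, Disjoint (X' a) L' := by
          intro a
          by_cases ha : a = m
          · subst ha
            rw [hXm', Finset.disjoint_left]
            intro x hx hx'
            rcases Finset.mem_insert.mp hx with rfl | hx
            · rw [hL'] at hx'
              exact (Finset.notMem_erase _ _) hx'
            · rw [hL'] at hx'
              exact (Finset.disjoint_left.mp (hdisj m)) hx (Finset.mem_of_mem_erase hx')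
          · rw [hX', Function.update_of_ne ha, hL']
            exact Finset.disjoint_of_subset_right (Finset.erase_subset _ _) (hdisj a)
        have IH := ih (t + 1) L' X' hdisj'
        rw [hσ t, ← ho, hoo] at IH
        obtain ⟨IH1, IH2⟩ := IH
        set R := crr k v σ fuel (t + 1) L' X' with hR
        have hcardm : (X' m).card = (X m).card + 1 := by
          rw [hXm', Finset.card_insert_of_notMem hgXm]
        have hgRm : X' m ⊆ R m := crr_subset k v σ fuel (t + 1) L' X' m
        have hnewm : crr k v σ (fuel + 1) t L X m \ X m = insert g (R m \ X' m) := by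
          rw [hcrr m]
          exact sdiff_insert_step hgXm hXm' hgRm
        have hnewo : crr k v σ (fuel + 1) t L X o \ X o = R o \ X' o := by
          rw [hcrr o, hXo']
        have hvLm : vals (v m) L' = (vals (v m) L).erase (v m g) := by
          rw [hL']; exact vals_erase (v m) hgL
        have hvLo : vals (v o) L' = (vals (v o) L).erase (v o g) := by
          rw [hL']; exact vals_erase (v o) hgL
        have hLcard : L'.card = L.card - 1 := by
          rw [hL']; exact Finset.card_erase_of_mem hgL
        have hLpos : 1 ≤ L.card := Finset.card_pos.mpr hL
        constructor
        · -- part 1 : mover m's own bundle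
          intro hf
          rw [hnewm]
          have hgS : g ∉ R m \ X' m := fun h =>
            (Finset.mem_sdiff.mp h).2 (by rw [hXm']; exact Finset.mem_insert_self _ _)
          rw [Finset.sum_insert hgS]
          have hfuel' : 2 * L'.card + 1 ≤ fuel := by omega
          have hIH := IH2 hfuel'
          rw [hcardm] at hIH
          obtain ⟨c', hc'⟩ : ∃ c', k m - (X m).card = c' + 1 := ⟨k m - (X m).card - 1, by omega⟩
          have hc'' : k m - ((X m).card + 1) = c' := by omega
          rw [hc'']  at hIH
          rw [hc', Finset.sum_range_succ' (fun s => nth (vals (v m) L) (2 * s)) c']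
          have hterm0 : nth (vals (v m) L) (2 * 0) ≤ v m g := by
            simpa using nth_le_of_forall_le (vals_max_of_best hL) (s := 0)
          have hterms : ∀ s, nth (vals (v m) L) (2 * (s + 1)) ≤ nth (vals (v m) L') (2 * s + 1) := by
            intro s
            rw [hvLm]
            have := nth_succ_le_nth_erase (m := vals (v m) L) (v m g) (2 * s + 1)
            refine le_trans (nth_anti (by omega)) this
          calc (∑ s ∈ Finset.range c', nth (vals (v m) L) (2 * (s + 1)))
                + nth (vals (v m) L) (2 * 0)
              ≤ (∑ s ∈ Finset.range c', nth (vals (v m) L') (2 * s + 1)) + v m g := by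
                refine Nat.add_le_add ?_ hterm0
                exact Finset.sum_le_sum (fun s _ => hterms s)
            _ ≤ (∑ x ∈ R m \ X' m, v m x) + v m g := Nat.add_le_add_right hIH _
            _ = v m g + ∑ x ∈ R m \ X' m, v m x := Nat.add_comm _ _
        · -- part 2 : second agent o's own bundle
          intro hf
          rw [hnewo, hXo']
          have hfuel' : 2 * L'.card ≤ fuel := by omega
          have hIH := IH1 hfuel'
          rw [hXo'] at hIH
          refine le_trans ?_ hIH
          refine Finset.sum_le_sum (fun s _ => ?_)
          rw [hvLo]
          have := nth_succ_le_nth_erase (m := vals (v o) L) (v o g) (2 * s)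
          exact le_trans (nth_anti (by omega)) this
      · -- skip step (mover capped)
        have hcrr : ∀ a, crr k v σ (fuel + 1) t L X a = crr k v σ fuel (t + 1) L X a := by
          intro a
          rw [crr_succ, if_pos hL, if_neg hcap]
        have IH := ih (t + 1) L X hdisj
        rw [hσ t, fin2_add_two] at IH
        obtain ⟨IH1, IH2⟩ := IH
        constructor
        · intro hf
          have hz : k (σ t) - (X (σ t)).card = 0 := by omega
          rw [hz]
          simp
        · intro hf
          rw [hcrr]
          have hIH := IH1 (by omega)
          refine le_trans ?_ hIH
          refine Finset.sum_le_sum (fun s _ => ?_)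
          exact nth_anti (by omega)
    · -- L empty
      have hLe : L = ∅ := Finset.not_nonempty_iff_eq_empty.mp hL
      subst hLe
      constructor <;> intro _ <;> simp [vals_empty, nth_zero]

end LOW


section CAT

variable {α : Type*} [DecidableEq α] [LinearOrder α] [Inhabited α]

def sigp (p : Fin 2) : ℕ → Fin 2 := fun t => if t % 2 = 0 then p else p + 1

lemma sigp_zero (p : Fin 2) : sigp p 0 = p := rfl

lemma sigp_succ (p : Fin 2) : ∀ s, sigp p (s + 1) = sigp p s + 1 := by
  intro s
  rcases Nat.even_or_odd s with ⟨c, hc⟩ | ⟨c, hc⟩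
  · have h1 : s % 2 = 0 := by omega
    have h2 : (s + 1) % 2 = 1 := by omega
    simp [sigp, h1, h2]
  · have h1 : s % 2 = 1 := by omega
    have h2 : (s + 1) % 2 = 0 := by omega
    simp [sigp, h1, h2, fin2_add_two]

variable (k2 : Fin 2 → ℕ) (v : Fin 2 → α → ℕ) (p : Fin 2) (M : Finset α)

lemma crr2_eq : crr2 k2 v p M = crr k2 v (sigp p) (2 * (M.card + 1)) 0 M (fun _ => ∅) := rfl

lemma cat_subset (i : Fin 2) : crr2 k2 v p M i ⊆ M := by
  rw [crr2_eq]
  refine subset_trans (crr_subset_union k2 v (sigp p) _ 0 M (fun _ => ∅) i) ?_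
  simp

lemma cat_card (i : Fin 2) : (crr2 k2 v p M i).card ≤ k2 i := by
  rw [crr2_eq]
  exact crr_card k2 v (sigp p) _ 0 M (fun _ => ∅) i (by simp)

lemma cat_gen2 (s : ℕ) :
    nth (vals (v (p + 1)) (crr2 k2 v p M p)) s
      ≤ nth (vals (v (p + 1)) M) (s + min s (k2 (p + 1))) := by
  have h := (gen_bound k2 v (sigp p) (sigp_succ p) (2 * (M.card + 1)) 0 M (fun _ => ∅)
    (fun a => Finset.disjoint_empty_left M)).1 s
  rw [sigp_zero] at h
  simpa [crr2_eq] using h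

lemma cat_gen1 (s : ℕ) :
    nth (vals (v p) (crr2 k2 v p M (p + 1))) s
      ≤ nth (vals (v p) M) (s + min (s + 1) (k2 p)) := by
  have h := (gen_bound k2 v (sigp p) (sigp_succ p) (2 * (M.card + 1)) 0 M (fun _ => ∅)
    (fun a => Finset.disjoint_empty_left M)).2 s
  rw [sigp_zero] at h
  simpa [crr2_eq] using h

lemma cat_low1 :
    ∑ s ∈ Finset.range (k2 p), nth (vals (v p) M) (2 * s)
      ≤ ∑ x ∈ crr2 k2 v p M p, v p x := by
  have h := (low_bound k2 v (sigp p) (sigp_succ p) (2 * (M.card + 1)) 0 M (fun _ => ∅)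
    (fun a => Finset.disjoint_empty_left M)).1 (by omega)
  rw [sigp_zero] at h
  simpa [crr2_eq] using h

lemma cat_low2 :
    ∑ s ∈ Finset.range (k2 (p + 1)), nth (vals (v (p + 1)) M) (2 * s + 1)
      ≤ ∑ x ∈ crr2 k2 v p M (p + 1), v (p + 1) x := by
  have h := (low_bound k2 v (sigp p) (sigp_succ p) (2 * (M.card + 1)) 0 M (fun _ => ∅)
    (fun a => Finset.disjoint_empty_left M)).2 (by omega)
  rw [sigp_zero] at h
  simpa [crr2_eq] using h

/-- First picker has no feasible envy within a category. -/
lemma cat_no_envy :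
    feasVal (v p) (k2 p) (crr2 k2 v p M (p + 1)) ≤ (crr2 k2 v p M p).sum (v p) := by
  calc feasVal (v p) (k2 p) (crr2 k2 v p M (p + 1))
      ≤ ∑ s ∈ Finset.range (k2 p), nth (vals (v p) (crr2 k2 v p M (p + 1))) s :=
        feasVal_le_sum_nth
    _ ≤ ∑ s ∈ Finset.range (k2 p), nth (vals (v p) M) (2 * s) := by
        refine Finset.sum_le_sum (fun s hs => ?_)
        rw [Finset.mem_range] at hs
        refine le_trans (cat_gen1 k2 v p M s) (nth_anti ?_)
        omega
    _ ≤ ∑ x ∈ crr2 k2 v p M p, v p x := cat_low1 k2 v p M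

/-- Second picker has feasible envy up to one item within a category. -/
lemma cat_ef1 :
    ∃ y, feasVal (v (p + 1)) (k2 (p + 1)) ((crr2 k2 v p M p).erase y)
      ≤ (crr2 k2 v p M (p + 1)).sum (v (p + 1)) := by
  rcases Finset.eq_empty_or_nonempty (crr2 k2 v p M p) with hY | hY
  · refine ⟨default, ?_⟩
    rw [hY]
    simp only [Finset.erase_empty, feasVal_empty]
    exact Nat.zero_le _
  · obtain ⟨y, hy, hymax⟩ := Finset.exists_max_image _ (v (p + 1)) hY
    refine ⟨y, ?_⟩
    have hvmax : ∀ x ∈ vals (v (p + 1)) (crr2 k2 v p M p), x ≤ v (p + 1) y := by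
      intro x hx
      obtain ⟨z, hz, rfl⟩ := Multiset.mem_map.mp hx
      exact hymax z (Finset.mem_val.mp hz)
    calc feasVal (v (p + 1)) (k2 (p + 1)) ((crr2 k2 v p M p).erase y)
        ≤ ∑ s ∈ Finset.range (k2 (p + 1)), nth (vals (v (p + 1)) ((crr2 k2 v p M p).erase y)) s :=
          feasVal_le_sum_nth
      _ ≤ ∑ s ∈ Finset.range (k2 (p + 1)), nth (vals (v (p + 1)) M) (2 * s + 1) := by
          refine Finset.sum_le_sum (fun s hs => ?_)
          rw [Finset.mem_range] at hs
          rw [vals_erase (v (p + 1)) hy]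
          refine le_trans (nth_erase_max (mem_vals hy) hvmax s) ?_
          refine le_trans (cat_gen2 k2 v p M (s + 1)) (nth_anti ?_)
          omega
      _ ≤ ∑ x ∈ crr2 k2 v p M (p + 1), v (p + 1) x := cat_low2 k2 v p M

/-- Surplus half (a): value to the second picker of the first picker's bundle
is at most what she gets when she picks first herself. -/
lemma cat_surplus_a :
    feasVal (v (p + 1)) (k2 (p + 1)) (crr2 k2 v p M p)
      ≤ (crr2 k2 v (p + 1) M (p + 1)).sum (v (p + 1)) := by
  calc feasVal (v (p + 1)) (k2 (p + 1)) (crr2 k2 v p M p)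
      ≤ ∑ s ∈ Finset.range (k2 (p + 1)), nth (vals (v (p + 1)) (crr2 k2 v p M p)) s :=
        feasVal_le_sum_nth
    _ ≤ ∑ s ∈ Finset.range (k2 (p + 1)), nth (vals (v (p + 1)) M) (2 * s) := by
        refine Finset.sum_le_sum (fun s hs => ?_)
        rw [Finset.mem_range] at hs
        refine le_trans (cat_gen2 k2 v p M s) (nth_anti ?_)
        omega
    _ ≤ ∑ x ∈ crr2 k2 v (p + 1) M (p + 1), v (p + 1) x := cat_low1 k2 v (p + 1) M

/-- Surplus half (b): value to an agent of the opponent's bundle when she picks first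
is at most what she gets when the opponent picks first. -/
lemma cat_surplus_b :
    feasVal (v p) (k2 p) (crr2 k2 v p M (p + 1))
      ≤ (crr2 k2 v (p + 1) M ((p + 1) + 1)).sum (v p) := by
  have hpp : (p + 1) + 1 = p := fin2_add_two p
  calc feasVal (v p) (k2 p) (crr2 k2 v p M (p + 1))
      ≤ ∑ s ∈ Finset.range (k2 p), nth (vals (v p) (crr2 k2 v p M (p + 1))) s :=
        feasVal_le_sum_nth
    _ ≤ ∑ s ∈ Finset.range (k2 p), nth (vals (v p) M) (2 * s + 1) := by
        refine Finset.sum_le_sum (fun s hs => ?_)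
        rw [Finset.mem_range] at hs
        refine le_trans (cat_gen1 k2 v p M s) (nth_anti ?_)
        omega
    _ ≤ ∑ x ∈ crr2 k2 v (p + 1) M ((p + 1) + 1), v ((p + 1) + 1) x := by
        have h := cat_low2 k2 v (p + 1) M
        rw [hpp] at h ⊢
        exact h
    _ = ∑ x ∈ crr2 k2 v (p + 1) M ((p + 1) + 1), v p x := by rw [hpp]

end CAT


section RUN

variable {α : Type*} [DecidableEq α] [LinearOrder α] [Inhabited α]
variable {l : ℕ} [NeZero l]

lemma bestCat_spec (f : Fin l → ℤ) {rem : Finset (Fin l)} (hrem : rem.Nonempty) :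
    bestCat f rem ∈ rem ∧ ∀ c ∈ rem, f c ≤ f (bestCat f rem) := by
  obtain ⟨b, hb, hmax⟩ := Finset.exists_max_image rem f hrem
  have hne : (rem.filter (fun c => ∀ c' ∈ rem, f c' ≤ f c)).Nonempty :=
    ⟨b, Finset.mem_filter.mpr ⟨hb, hmax⟩⟩
  rw [bestCat, dif_pos hne]
  have := Finset.min'_mem _ hne
  rw [Finset.mem_filter] at this
  exact this

variable (k : Fin 2 → Fin l → ℕ) (v : Fin 2 → α → ℕ) (C : Fin l → Finset α)

lemma rr2run_zero (rem : Finset (Fin l)) (a : Fin 2) (X : Fin 2 → Finset α) :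
    rr2run k v C 0 rem a X = X := rfl

lemma rr2run_succ (fuel : ℕ) (rem : Finset (Fin l)) (a : Fin 2) (X : Fin 2 → Finset α) :
    rr2run k v C (fuel + 1) rem a X =
      if rem.Nonempty then
        rr2run k v C fuel (rem.erase (bestCat (catSurplus k v C a) rem)) (a + 1)
          (fun i => X i ∪
            crr2 (fun t => k t (bestCat (catSurplus k v C a) rem)) v a
              (C (bestCat (catSurplus k v C a) rem)) i)
      else X := rfl

lemma rr2run_pos {fuel : ℕ} (hf : 0 < fuel) (rem : Finset (Fin l)) (a : Fin 2)
    (X : Fin 2 → Finset α) :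
    rr2run k v C fuel rem a X =
      if rem.Nonempty then
        rr2run k v C (fuel - 1) (rem.erase (bestCat (catSurplus k v C a) rem)) (a + 1)
          (fun i => X i ∪
            crr2 (fun t => k t (bestCat (catSurplus k v C a) rem)) v a
              (C (bestCat (catSurplus k v C a) rem)) i)
      else X := by
  obtain ⟨f', rfl⟩ : ∃ f', fuel = f' + 1 := ⟨fuel - 1, by omega⟩
  simp only [Nat.add_sub_cancel]
  exact rr2run_succ k v C f' rem a X

lemma rr2run_union (fuel : ℕ) :
    ∀ (rem : Finset (Fin l)) (a : Fin 2) (X : Fin 2 → Finset α) (i : Fin 2),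
    rr2run k v C fuel rem a X i = X i ∪ rr2run k v C fuel rem a (fun _ => ∅) i := by
  induction fuel with
  | zero => intro rem a X i; rw [rr2run_zero, rr2run_zero]; simp
  | succ fuel ih =>
    intro rem a X i
    rw [rr2run_succ, rr2run_succ]
    by_cases hrem : rem.Nonempty
    · rw [if_pos hrem, if_pos hrem]
      rw [ih _ _ _ i, ih _ (a + 1) (fun j => (∅ : Finset α) ∪ _) i]
      simp [Finset.union_assoc]
    · rw [if_neg hrem, if_neg hrem]
      simp

lemma nrun_subset (fuel : ℕ) :
    ∀ (rem : Finset (Fin l)) (a : Fin 2) (i : Fin 2),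
    rr2run k v C fuel rem a (fun _ => ∅) i ⊆ rem.biUnion C := by
  induction fuel with
  | zero => intro rem a i; rw [rr2run_zero]; exact Finset.empty_subset _
  | succ fuel ih =>
    intro rem a i
    rw [rr2run_succ]
    by_cases hrem : rem.Nonempty
    · rw [if_pos hrem]
      rw [rr2run_union]
      set h1 := bestCat (catSurplus k v C a) rem with hh1
      have hmem : h1 ∈ rem := (bestCat_spec _ hrem).1
      intro x hx
      rcases Finset.mem_union.mp hx with hx | hx
      · rw [Finset.empty_union] at hx
        have := cat_subset (fun t => k t h1) v a (C h1) i hx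
        exact Finset.mem_biUnion.mpr ⟨h1, hmem, this⟩
      · have := ih (rem.erase h1) (a + 1) i hx
        obtain ⟨h, hh, hxh⟩ := Finset.mem_biUnion.mp this
        exact Finset.mem_biUnion.mpr ⟨h, Finset.mem_of_mem_erase hh, hxh⟩
    · rw [if_neg hrem]
      exact Finset.empty_subset _

lemma cs_nonneg (a : Fin 2) (h : Fin l) : 0 ≤ catSurplus k v C a h := by
  rw [catSurplus]
  have h1 : feasVal (v a) (k a h) (crr2 (fun i => k i h) v a (C h) (a + 1))
      ≤ feasVal (v a) (k a h) (crr2 (fun i => k i h) v a (C h) a) := by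
    rw [feasVal_eq_sum (cat_card (fun i => k i h) v a (C h) a)]
    exact cat_no_envy (fun i => k i h) v a (C h)
  omega

/-- per category surplus lemma, packaged in ℤ. -/
lemma cat_p4 (a : Fin 2) (h : Fin l) :
    -catSurplus k v C (a + 1) h ≤
      (((crr2 (fun i => k i h) v a (C h) (a + 1)).sum (v (a + 1)) : ℕ) : ℤ)
        - ((feasVal (v (a + 1)) (k (a + 1) h) (crr2 (fun i => k i h) v a (C h) a) : ℕ) : ℤ) := by
  have haa : a + 1 + 1 = a := fin2_add_two a
  rw [catSurplus, haa]
  have ha : feasVal (v (a + 1)) (k (a + 1) h) (crr2 (fun i => k i h) v a (C h) a)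
      ≤ feasVal (v (a + 1)) (k (a + 1) h) (crr2 (fun i => k i h) v (a + 1) (C h) (a + 1)) := by
    rw [feasVal_eq_sum (cat_card (fun i => k i h) v (a + 1) (C h) (a + 1))]
    exact cat_surplus_a (fun i => k i h) v a (C h)
  have hb2 : feasVal (v (a + 1)) (k (a + 1) h) (crr2 (fun i => k i h) v (a + 1) (C h) a)
      ≤ (crr2 (fun i => k i h) v a (C h) (a + 1)).sum (v (a + 1)) := by
    have hsb := cat_surplus_b (fun i => k i h) v (a + 1) (C h)
    rw [haa] at hsb
    exact hsb
  omega

lemma main_ind (hCdisj : ∀ h h', h ≠ h' → Disjoint (C h) (C h')) (fuel : ℕ) :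
    ∀ (rem : Finset (Fin l)) (a : Fin 2), rem.card ≤ fuel →
    (0 ≤ ∑ h ∈ rem,
        ((((rr2run k v C fuel rem a (fun _ => ∅) a ∩ C h).sum (v a) : ℕ) : ℤ)
          - (feasVal (v a) (k a h) (rr2run k v C fuel rem a (fun _ => ∅) (a + 1) ∩ C h) : ℤ)))
    ∧ (rem.Nonempty →
      -catSurplus k v C (a + 1) (bestCat (catSurplus k v C a) rem) ≤ ∑ h ∈ rem,
        ((((rr2run k v C fuel rem a (fun _ => ∅) (a + 1) ∩ C h).sum (v (a + 1)) : ℕ) : ℤ)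
          - (feasVal (v (a + 1)) (k (a + 1) h)
              (rr2run k v C fuel rem a (fun _ => ∅) a ∩ C h) : ℤ))) := by
  induction fuel with
  | zero =>
    intro rem a hcard
    have : rem = ∅ := Finset.card_eq_zero.mp (by omega)
    subst this
    constructor
    · simp
    · intro h; exact absurd h (by simp)
  | succ fuel ih =>
    intro rem a hcard
    by_cases hrem : rem.Nonempty
    · set h1 := bestCat (catSurplus k v C a) rem with hh1
      have hmem : h1 ∈ rem := (bestCat_spec _ hrem).1
      have hmax : ∀ c ∈ rem, catSurplus k v C a c ≤ catSurplus k v C a h1 :=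
        (bestCat_spec _ hrem).2
      have hcard' : (rem.erase h1).card ≤ fuel := by
        rw [Finset.card_erase_of_mem hmem]
        omega
      set B := crr2 (fun t => k t h1) v a (C h1) with hB
      set N' := rr2run k v C fuel (rem.erase h1) (a + 1) (fun _ => ∅) with hN'
      have hsplit : ∀ i, rr2run k v C (fuel + 1) rem a (fun _ => ∅) i = B i ∪ N' i := by
        intro i
        rw [rr2run_succ, if_pos hrem, rr2run_union]
        simp [hB, hN', hh1]
      have hBsub : ∀ i, B i ⊆ C h1 := fun i => cat_subset _ v a (C h1) i
      have hN'sub : ∀ i, N' i ⊆ (rem.erase h1).biUnion C := fun i => nrun_subset k v C fuel (rem.erase h1) (a + 1) i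
      have hNh1 : ∀ i, (B i ∪ N' i) ∩ C h1 = B i := by
        intro i
        rw [Finset.union_inter_distrib_right]
        have h2 : N' i ∩ C h1 = ∅ := by
          rw [Finset.eq_empty_iff_forall_notMem]
          intro x hx
          rw [Finset.mem_inter] at hx
          obtain ⟨h, hh, hxh⟩ := Finset.mem_biUnion.mp (hN'sub i hx.1)
          have hne : h ≠ h1 := Finset.ne_of_mem_erase hh
          exact Finset.disjoint_left.mp (hCdisj h h1 hne) hxh hx.2
        rw [h2, Finset.union_empty, Finset.inter_eq_left.mpr (hBsub i)]
      have hNh : ∀ i, ∀ h ∈ rem.erase h1, (B i ∪ N' i) ∩ C h = N' i ∩ C h := by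
        intro i h hh
        rw [Finset.union_inter_distrib_right]
        have h2 : B i ∩ C h = ∅ := by
          rw [Finset.eq_empty_iff_forall_notMem]
          intro x hx
          rw [Finset.mem_inter] at hx
          have hne : h1 ≠ h := fun he => Finset.ne_of_mem_erase hh he.symm
          exact Finset.disjoint_left.mp (hCdisj h1 h hne) (hBsub i hx.1) hx.2
        rw [h2, Finset.empty_union]
      have hIH := ih (rem.erase h1) (a + 1) hcard'
      have haa : a + 1 + 1 = a := fin2_add_two a
      rw [haa] at hIH
      rw [← hN'] at hIH
      obtain ⟨IH2, IH3⟩ := hIH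
      constructor
      · -- M2 : picker a has nonnegative surplus on rem
        rw [← Finset.add_sum_erase rem _ hmem]
        simp only [hsplit]
        rw [hNh1, hNh1]
        have hsum2 : ∑ h ∈ rem.erase h1,
            (((((B a ∪ N' a) ∩ C h).sum (v a) : ℕ) : ℤ)
              - ((feasVal (v a) (k a h) ((B (a + 1) ∪ N' (a + 1)) ∩ C h) : ℕ) : ℤ))
            = ∑ h ∈ rem.erase h1,
            ((((N' a ∩ C h).sum (v a) : ℕ) : ℤ)
              - ((feasVal (v a) (k a h) (N' (a + 1) ∩ C h) : ℕ) : ℤ)) := by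
          refine Finset.sum_congr rfl (fun h hh => ?_)
          rw [hNh a h hh, hNh (a + 1) h hh]
        rw [hsum2]
        have hterm : catSurplus k v C a h1 ≤
            (((B a).sum (v a) : ℕ) : ℤ) - ((feasVal (v a) (k a h1) (B (a + 1)) : ℕ) : ℤ) := by
          rw [catSurplus, hB]
          have := feasVal_le_sum (v := v a) (c := k a h1)
            (T := crr2 (fun i => k i h1) v a (C h1) a)
          omega
        have hterm2 : catSurplus k v C a h1 ≤
            (((∑ x ∈ B a, v a x : ℕ)) : ℤ)
              - ((feasVal (v a) (k a h1) (B (a + 1)) : ℕ) : ℤ) := hterm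
        rcases Finset.eq_empty_or_nonempty (rem.erase h1) with hre | hre
        · rw [hre]
          simp only [Finset.sum_empty, add_zero]
          have := cs_nonneg k v C a h1
          omega
        · have hIH3 := IH3 hre
          have hbc : bestCat (catSurplus k v C (a + 1)) (rem.erase h1) ∈ rem :=
            Finset.mem_of_mem_erase (bestCat_spec _ hre).1
          have hcmp := hmax _ hbc
          omega
      · -- M3 : second agent's deficit bounded by surplus of chosen category
        intro _
        rw [← Finset.add_sum_erase rem _ hmem]
        simp only [hsplit]
        rw [hNh1, hNh1]
        have hsum3 : ∑ h ∈ rem.erase h1,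
            (((((B (a + 1) ∪ N' (a + 1)) ∩ C h).sum (v (a + 1)) : ℕ) : ℤ)
              - ((feasVal (v (a + 1)) (k (a + 1) h) ((B a ∪ N' a) ∩ C h) : ℕ) : ℤ))
            = ∑ h ∈ rem.erase h1,
            ((((N' (a + 1) ∩ C h).sum (v (a + 1)) : ℕ) : ℤ)
              - ((feasVal (v (a + 1)) (k (a + 1) h) (N' a ∩ C h) : ℕ) : ℤ)) := by
          refine Finset.sum_congr rfl (fun h hh => ?_)
          rw [hNh a h hh, hNh (a + 1) h hh]
        rw [hsum3]
        have hterm := cat_p4 k v C a h1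
        rw [← hB] at hterm
        have hterm2 : -catSurplus k v C (a + 1) h1 ≤
            (((∑ x ∈ B (a + 1), v (a + 1) x : ℕ)) : ℤ)
              - ((feasVal (v (a + 1)) (k (a + 1) h1) (B a) : ℕ) : ℤ) := hterm
        have := IH2
        omega
    · rw [Finset.not_nonempty_iff_eq_empty] at hrem
      subst hrem
      constructor
      · simp
      · intro h; exact absurd h (by simp)

end RUN


section FINAL

variable {α : Type*} [DecidableEq α] [LinearOrder α] [Inhabited α]
variable {l : ℕ} [NeZero l]
variable (C : Fin l → Finset α)

lemma sum_split (hCdisj : ∀ h h', h ≠ h' → Disjoint (C h) (C h'))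
    (w : α → ℕ) {S : Finset α} (hS : S ⊆ Finset.univ.biUnion C) :
    S.sum w = ∑ h, (S ∩ C h).sum w := by
  have hrepr : S = Finset.univ.biUnion (fun h => S ∩ C h) := by
    ext x
    simp only [Finset.mem_biUnion, Finset.mem_inter, Finset.mem_univ, true_and]
    constructor
    · intro hx
      obtain ⟨h, _, hxh⟩ := Finset.mem_biUnion.mp (hS hx)
      exact ⟨h, hx, hxh⟩
    · rintro ⟨h, hx, _⟩
      exact hx
  conv_lhs => rw [hrepr]
  refine Finset.sum_biUnion ?_
  intro h _ h' _ hne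
  have := hCdisj h h' hne
  exact Finset.disjoint_of_subset_left Finset.inter_subset_right
    (Finset.disjoint_of_subset_right Finset.inter_subset_right this)

lemma pfeas_le (hCdisj : ∀ h h', h ≠ h' → Disjoint (C h) (C h'))
    (w : α → ℕ) (kc : Fin l → ℕ) {T : Finset α} (hT : T ⊆ Finset.univ.biUnion C) :
    pFeasVal w kc C T ≤ ∑ h, feasVal w (kc h) (T ∩ C h) := by
  rw [pFeasVal]
  refine Finset.sup_le ?_
  intro b hb
  obtain ⟨S, hSmem, rfl⟩ := Finset.mem_image.mp hb
  rw [Finset.mem_filter, Finset.mem_powerset] at hSmem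
  obtain ⟨hSsub, hScap⟩ := hSmem
  have : S.sum w = ∑ h, (S ∩ C h).sum w :=
    sum_split C hCdisj w (hSsub.trans hT)
  rw [this]
  refine Finset.sum_le_sum (fun h _ => ?_)
  exact le_feasVal (Finset.inter_subset_inter hSsub (Finset.Subset.refl _)) (hScap h)

end FINAL


section FINAL2

variable {α : Type*} [DecidableEq α] [LinearOrder α] [Inhabited α]

lemma sdiff_inter_comm' (S U T : Finset α) : (S \ U) ∩ T = (S ∩ T) \ U := by
  ext x
  simp only [Finset.mem_inter, Finset.mem_sdiff]
  tauto

lemma stmt12_aux {α : Type*} [DecidableEq α] [LinearOrder α] [Inhabited α]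
    {l : ℕ} [NeZero l] (M : Finset α) (C : Fin l → Finset α)
    (hCdisj : ∀ h h', h ≠ h' → Disjoint (C h) (C h'))
    (hCunion : Finset.univ.biUnion C = M)
    (k : Fin 2 → Fin l → ℕ) (hk : ∀ h, (C h).card ≤ k 0 h + k 1 h)
    (v : Fin 2 → α → ℕ)
    (X : Fin 2 → Finset α)
    (hX : X = rr2run k v C l Finset.univ 0 (fun _ => ∅)) :
    (∀ i : Fin 2, ∃ Y ⊆ X (i + 1), Y.card ≤ 1 ∧
      pFeasVal (v i) (k i) C (X (i + 1) \ Y) ≤ (X i).sum (v i)) ∧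
    pFeasVal (v 0) (k 0) C (X 1) ≤ (X 0).sum (v 0) := by
  have hl : 0 < l := Nat.pos_of_ne_zero (NeZero.ne l)
  haveI : Nonempty (Fin l) := ⟨⟨0, hl⟩⟩
  have e01 : (0 : Fin 2) + 1 = 1 := by decide
  have e11 : (1 : Fin 2) + 1 = 0 := by decide
  have hXsub : ∀ i, X i ⊆ Finset.univ.biUnion C := by
    intro i; rw [hX]; exact nrun_subset k v C l Finset.univ 0 i
  have hfuel : (Finset.univ : Finset (Fin l)).card ≤ l := by
    rw [Finset.card_univ, Fintype.card_fin]
  -- agent 0 : no envy at all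
  have hmain := (main_ind k v C hCdisj l Finset.univ 0 hfuel).1
  rw [← hX, e01] at hmain
  have hagent0 : pFeasVal (v 0) (k 0) C (X 1) ≤ (X 0).sum (v 0) := by
    have hdec := pfeas_le C hCdisj (v 0) (k 0) (hXsub 1)
    have hsums : (X 0).sum (v 0) = ∑ h, (X 0 ∩ C h).sum (v 0) :=
      sum_split C hCdisj (v 0) (hXsub 0)
    rw [Finset.sum_sub_distrib, sub_nonneg] at hmain
    have hcast : (∑ h, feasVal (v 0) (k 0 h) (X 1 ∩ C h)) ≤ ∑ h, (X 0 ∩ C h).sum (v 0) := by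
      exact_mod_cast hmain
    omega
  have fin2c : ∀ i : Fin 2, i = 0 ∨ i = 1 := by decide
  refine ⟨?_, hagent0⟩
  intro i
  rcases fin2c i with rfl | rfl
  · -- agent 0 : take Y = ∅
    refine ⟨∅, Finset.empty_subset _, by simp, ?_⟩
    simpa using hagent0
  · -- agent 1 : EF1 with one item from the first category
    have huniv : (Finset.univ : Finset (Fin l)).Nonempty := Finset.univ_nonempty
    set h1 := bestCat (catSurplus k v C 0) Finset.univ with hh1
    have hmem : h1 ∈ (Finset.univ : Finset (Fin l)) := Finset.mem_univ _
    set B := crr2 (fun t => k t h1) v 0 (C h1) with hB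
    set N' := rr2run k v C (l - 1) (Finset.univ.erase h1) 1 (fun _ => ∅) with hN'
    have hsplit : ∀ j, X j = B j ∪ N' j := by
      intro j
      rw [hX, rr2run_pos k v C hl, if_pos huniv, rr2run_union]
      simp [hB, hN', hh1, e01]
    have hBsub : ∀ j, B j ⊆ C h1 := fun j => cat_subset _ v 0 (C h1) j
    have hN'sub : ∀ j, N' j ⊆ (Finset.univ.erase h1).biUnion C :=
      fun j => nrun_subset k v C (l - 1) (Finset.univ.erase h1) 1 j
    have hNh1 : ∀ j, X j ∩ C h1 = B j := by
      intro j
      rw [hsplit j, Finset.union_inter_distrib_right]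
      have h2 : N' j ∩ C h1 = ∅ := by
        rw [Finset.eq_empty_iff_forall_notMem]
        intro x hx
        rw [Finset.mem_inter] at hx
        obtain ⟨h, hh, hxh⟩ := Finset.mem_biUnion.mp (hN'sub j hx.1)
        have hne : h ≠ h1 := Finset.ne_of_mem_erase hh
        exact Finset.disjoint_left.mp (hCdisj h h1 hne) hxh hx.2
      rw [h2, Finset.union_empty, Finset.inter_eq_left.mpr (hBsub j)]
    have hNh : ∀ j, ∀ h ∈ Finset.univ.erase h1, X j ∩ C h = N' j ∩ C h := by
      intro j h hh
      rw [hsplit j, Finset.union_inter_distrib_right]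
      have h2 : B j ∩ C h = ∅ := by
        rw [Finset.eq_empty_iff_forall_notMem]
        intro x hx
        rw [Finset.mem_inter] at hx
        have hne : h1 ≠ h := fun he => Finset.ne_of_mem_erase hh he.symm
        exact Finset.disjoint_left.mp (hCdisj h1 h hne) (hBsub j hx.1) hx.2
      rw [h2, Finset.empty_union]
    -- the inner run bound
    have hcard' : (Finset.univ.erase h1).card ≤ l - 1 := by
      rw [Finset.card_erase_of_mem hmem, Finset.card_univ, Fintype.card_fin]
    have hmain2 := (main_ind k v C hCdisj (l - 1) (Finset.univ.erase h1) 1 hcard').1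
    rw [← hN', e11] at hmain2
    rw [Finset.sum_sub_distrib, sub_nonneg] at hmain2
    have hcast2 : (∑ h ∈ Finset.univ.erase h1, feasVal (v 1) (k 1 h) (N' 0 ∩ C h))
        ≤ ∑ h ∈ Finset.univ.erase h1, (N' 1 ∩ C h).sum (v 1) := by
      exact_mod_cast hmain2
    -- EF1 in the first category
    obtain ⟨y, hy⟩ := cat_ef1 (fun t => k t h1) v 0 (C h1)
    simp only [e01] at hy
    rw [← hB] at hy
    -- choose Y
    by_cases hyX : y ∈ X (1 + 1)
    · refine ⟨{y}, Finset.singleton_subset_iff.mpr hyX, by simp, ?_⟩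
      have h10 : (1 : Fin 2) + 1 = 0 := e11
      rw [h10] at hyX ⊢
      -- bound pFeasVal
      have hsub : X 0 \ {y} ⊆ Finset.univ.biUnion C :=
        (Finset.sdiff_subset).trans (hXsub 0)
      have hdec := pfeas_le C hCdisj (v 1) (k 1) hsub
      have hsum1 : ∑ h, feasVal (v 1) (k 1 h) ((X 0 \ {y}) ∩ C h)
          = feasVal (v 1) (k 1 h1) ((X 0 \ {y}) ∩ C h1)
            + ∑ h ∈ Finset.univ.erase h1, feasVal (v 1) (k 1 h) ((X 0 \ {y}) ∩ C h) :=
        (Finset.add_sum_erase _ _ hmem).symm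
      have hterm1 : feasVal (v 1) (k 1 h1) ((X 0 \ {y}) ∩ C h1) ≤ (B 1).sum (v 1) := by
        have : (X 0 \ {y}) ∩ C h1 = (B 0).erase y := by
          rw [sdiff_inter_comm', hNh1 0, Finset.erase_eq]
        rw [this]
        exact hy
      have hterm2 : ∑ h ∈ Finset.univ.erase h1, feasVal (v 1) (k 1 h) ((X 0 \ {y}) ∩ C h)
          ≤ ∑ h ∈ Finset.univ.erase h1, (N' 1 ∩ C h).sum (v 1) := by
        refine le_trans (Finset.sum_le_sum (fun h hh => ?_)) hcast2
        rw [sdiff_inter_comm', hNh 0 h hh]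
        exact feasVal_mono_subset Finset.sdiff_subset
      have hrhs : (X 1).sum (v 1)
          = (B 1).sum (v 1) + ∑ h ∈ Finset.univ.erase h1, (N' 1 ∩ C h).sum (v 1) := by
        rw [sum_split C hCdisj (v 1) (hXsub 1)]
        rw [← Finset.add_sum_erase _ _ hmem, hNh1 1]
        congr 1
        exact Finset.sum_congr rfl (fun h hh => by rw [hNh 1 h hh])
      rw [hrhs]
      omega
    · refine ⟨∅, Finset.empty_subset _, by simp, ?_⟩
      have h10 : (1 : Fin 2) + 1 = 0 := e11
      rw [h10] at hyX ⊢
      rw [Finset.sdiff_empty]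
      have hXy : X 0 = X 0 \ {y} := by
        ext x
        simp only [Finset.mem_sdiff, Finset.mem_singleton]
        constructor
        · intro hx
          exact ⟨hx, fun he => hyX (he ▸ hx)⟩
        · exact fun hx => hx.1
      rw [hXy]
      have hsub : X 0 \ {y} ⊆ Finset.univ.biUnion C :=
        (Finset.sdiff_subset).trans (hXsub 0)
      have hdec := pfeas_le C hCdisj (v 1) (k 1) hsub
      have hterm1 : feasVal (v 1) (k 1 h1) ((X 0 \ {y}) ∩ C h1) ≤ (B 1).sum (v 1) := by
        have : (X 0 \ {y}) ∩ C h1 = (B 0).erase y := by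
          rw [sdiff_inter_comm', hNh1 0, Finset.erase_eq]
        rw [this]
        exact hy
      have hterm2 : ∑ h ∈ Finset.univ.erase h1, feasVal (v 1) (k 1 h) ((X 0 \ {y}) ∩ C h)
          ≤ ∑ h ∈ Finset.univ.erase h1, (N' 1 ∩ C h).sum (v 1) := by
        refine le_trans (Finset.sum_le_sum (fun h hh => ?_)) hcast2
        rw [sdiff_inter_comm', hNh 0 h hh]
        exact feasVal_mono_subset Finset.sdiff_subset
      have hsum1 : ∑ h, feasVal (v 1) (k 1 h) ((X 0 \ {y}) ∩ C h)
          = feasVal (v 1) (k 1 h1) ((X 0 \ {y}) ∩ C h1)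
            + ∑ h ∈ Finset.univ.erase h1, feasVal (v 1) (k 1 h) ((X 0 \ {y}) ∩ C h) :=
        (Finset.add_sum_erase _ _ hmem).symm
      have hrhs : (X 1).sum (v 1)
          = (B 1).sum (v 1) + ∑ h ∈ Finset.univ.erase h1, (N' 1 ∩ C h).sum (v 1) := by
        rw [sum_split C hCdisj (v 1) (hXsub 1)]
        rw [← Finset.add_sum_erase _ _ hmem, hNh1 1]
        congr 1
        exact Finset.sum_congr rfl (fun h hh => by rw [hNh 1 h hh])
      rw [hrhs]
      omega

end FINAL2

end RR2
/-- RR-squared produces an F-EF1 allocation for two agents with additive valuations and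
partition-matroid constraints with common categories (possibly different capacities);
moreover the agent picking the first category (agent 0) has no feasible envy at all. -/
theorem stmt12 {α : Type*} [DecidableEq α] [LinearOrder α] [Inhabited α]
    {l : ℕ} [NeZero l] (M : Finset α) (C : Fin l → Finset α)
    (hCdisj : ∀ h h', h ≠ h' → Disjoint (C h) (C h'))
    (hCunion : Finset.univ.biUnion C = M)
    (k : Fin 2 → Fin l → ℕ) (hk : ∀ h, (C h).card ≤ k 0 h + k 1 h)
    (v : Fin 2 → α → ℕ)
    (X : Fin 2 → Finset α)
    (hX : X = rr2run k v C l Finset.univ 0 (fun _ => ∅)) :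
    (∀ i : Fin 2, ∃ Y ⊆ X (i + 1), Y.card ≤ 1 ∧
      pFeasVal (v i) (k i) C (X (i + 1) \ Y) ≤ (X i).sum (v i)) ∧
    pFeasVal (v 0) (k 0) C (X 1) ≤ (X 0).sum (v 0) := by
  exact RR2.stmt12_aux M C hCdisj hCunion k hk v X hX
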